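/- The number of monomials z_{s_1}^{p_1} z_{s_2}^{p_2} ⋯ z_{s_l}^{p_l} with 1 ≤ s_1 < s_2 < ⋯ < s_l ≤ n, total degree p_1 + ⋯ + p_l = d, and 1 ≤ p_i < s_i − s_{i−1} for all i (with s_0 = 0) is exactly binomial(n−1, d). Equivalently, the number of sequences (s_1,…,s_l,p_1,…,p_l) of positive integers with s_1 < ⋯ < s_l ≤ n, p_1 + ⋯ + p_l = d, and p_i < s_i − s_{i−1} for each i (s_0 = 0) equals binomial(n−1, d). -/

import Mathlib

/-- The chain relation. -/
def Rrel : ℕ × ℕ → ℕ × ℕ → Prop := fun a b => 1 ≤ b.2 ∧ b.2 + a.1 < b.1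

/-- Map a list of pairs to the union of the run intervals. -/
def Phi : List (ℕ × ℕ) → Finset ℕ
  | [] => ∅
  | (s, p) :: L => Finset.Ico (s - p) s ∪ Phi L

theorem Phi_lb : ∀ (L : List (ℕ × ℕ)) (t p₀ : ℕ), List.Chain Rrel (t, p₀) L →
    ∀ x ∈ Phi L, t < x
  | [], _, _, _ => by simp [Phi]
  | (s, p) :: M, t, p₀, h => by
    rcases List.chain_cons.mp h with ⟨⟨hp, hst⟩, hM⟩
    intro x hx
    simp only [Phi, Finset.mem_union, Finset.mem_Ico] at hx
    rcases hx with ⟨h1, h2⟩ | hx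
    · omega
    · have := Phi_lb M s p hM x hx; omega

theorem Phi_ub : ∀ (L : List (ℕ × ℕ)) (n : ℕ), (∀ q ∈ L, q.1 ≤ n) →
    ∀ x ∈ Phi L, x < n
  | [], _, _ => by simp [Phi]
  | (s, p) :: M, n, h => by
    intro x hx
    simp only [Phi, Finset.mem_union, Finset.mem_Ico] at hx
    have hs : s ≤ n := h (s, p) (by simp)
    rcases hx with ⟨_, h2⟩ | hx
    · omega
    · exact Phi_ub M n (fun q hq => h q (List.mem_cons_of_mem _ hq)) x hx

theorem Phi_card : ∀ (L : List (ℕ × ℕ)) (t p₀ : ℕ), List.Chain Rrel (t, p₀) L →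
    (Phi L).card = (L.map Prod.snd).sum
  | [], _, _, _ => by simp [Phi]
  | (s, p) :: M, t, p₀, h => by
    rcases List.chain_cons.mp h with ⟨⟨hp, hst⟩, hM⟩
    have hdisj : Disjoint (Finset.Ico (s - p) s) (Phi M) := by
      rw [Finset.disjoint_left]
      intro x hx hx'
      have := Phi_lb M s p hM x hx'
      simp only [Finset.mem_Ico] at hx
      omega
    simp only [Phi, List.map_cons, List.sum_cons]
    rw [Finset.card_union_of_disjoint hdisj, Nat.card_Ico]
    have := Phi_card M s p hM
    omega

theorem Phi_inj : ∀ (L L' : List (ℕ × ℕ)) (t p₀ p₀' : ℕ),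
    List.Chain Rrel (t, p₀) L → List.Chain Rrel (t, p₀') L' → Phi L = Phi L' → L = L'
  | [], [], _, _, _, _, _, _ => rfl
  | [], (s', p') :: M', t, p₀, p₀', _, h', he => by
    rcases List.chain_cons.mp h' with ⟨⟨hp, hst⟩, _⟩
    exfalso
    have hmem : s' - p' ∈ Phi ((s', p') :: M') := by
      simp only [Phi, Finset.mem_union, Finset.mem_Ico]
      left; omega
    rw [← he] at hmem
    simp [Phi] at hmem
  | (s, p) :: M, [], t, p₀, p₀', h, _, he => by
    rcases List.chain_cons.mp h with ⟨⟨hp, hst⟩, _⟩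
    exfalso
    have hmem : s - p ∈ Phi ((s, p) :: M) := by
      simp only [Phi, Finset.mem_union, Finset.mem_Ico]
      left; omega
    rw [he] at hmem
    simp [Phi] at hmem
  | (s, p) :: M, (s', p') :: M', t, p₀, p₀', h, h', he => by
    rcases List.chain_cons.mp h with ⟨⟨hp, hst⟩, hM⟩
    rcases List.chain_cons.mp h' with ⟨⟨hp', hst'⟩, hM'⟩
    have hMlb := Phi_lb M s p hM
    have hM'lb := Phi_lb M' s' p' hM'
    have mem1 : ∀ x, x ∈ Phi ((s, p) :: M) ↔ (s - p ≤ x ∧ x < s) ∨ x ∈ Phi M := by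
      intro x; simp [Phi, Finset.mem_Ico]
    have mem2 : ∀ x, x ∈ Phi ((s', p') :: M') ↔ (s' - p' ≤ x ∧ x < s') ∨ x ∈ Phi M' := by
      intro x; simp [Phi, Finset.mem_Ico]
    have h1 : s - p ∈ Phi ((s', p') :: M') := by rw [← he, mem1]; left; omega
    have h2 : s' - p' ∈ Phi ((s, p) :: M) := by rw [he, mem2]; left; omega
    have hbase : s - p = s' - p' := by
      rw [mem2] at h1; rw [mem1] at h2
      rcases h1 with h1 | h1
      · rcases h2 with h2 | h2
        · omega
        · have := hMlb _ h2; omega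
      · have := hM'lb _ h1
        rcases h2 with h2 | h2
        · omega
        · have := hMlb _ h2; omega
    have hs : s = s' := by
      by_contra hne
      rcases Nat.lt_or_ge s s' with hlt | hge
      · have hmem : s ∈ Phi ((s', p') :: M') := by rw [mem2]; left; omega
        rw [← he, mem1] at hmem
        rcases hmem with h3 | h3
        · omega
        · have := hMlb _ h3; omega
      · have hlt' : s' < s := by omega
        have hmem : s' ∈ Phi ((s, p) :: M) := by rw [mem1]; left; omega
        rw [he, mem2] at hmem
        rcases hmem with h3 | h3
        · omega
        · have := hM'lb _ h3; omega
    have hpp : p = p' := by omega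
    subst hs; subst hpp
    have hMM : Phi M = Phi M' := by
      ext x
      constructor
      · intro hx
        have hxs := hMlb _ hx
        have hmem : x ∈ Phi ((s, p) :: M') := by rw [← he, mem1]; right; exact hx
        rw [mem2] at hmem
        rcases hmem with h3 | h3
        · omega
        · exact h3
      · intro hx
        have hxs := hM'lb _ hx
        have hmem : x ∈ Phi ((s, p) :: M) := by rw [he, mem2]; right; exact hx
        rw [mem1] at hmem
        rcases hmem with h3 | h3
        · omega
        · exact h3
    rw [Phi_inj M M' s p p hM hM' hMM]

theorem exists_not_mem_run (S : Finset ℕ) (m : ℕ) : ∃ k, m + k ∉ S := by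
  refine ⟨S.sup id + 1, fun h => ?_⟩
  have := Finset.le_sup (f := id) h
  simp only [id] at this
  omega

/-- Inverse map: decompose a finset into maximal runs. -/
def Psi (S : Finset ℕ) : List (ℕ × ℕ) :=
  if h : S = ∅ then []
  else
    let m := S.min' (Finset.nonempty_iff_ne_empty.mpr h)
    let p := Nat.find (exists_not_mem_run S m)
    (m + p, p) :: Psi (S \ Finset.Ico m (m + p))
termination_by S.card
decreasing_by
  have hmS : m ∈ S := S.min'_mem _
  have hp : 1 ≤ p := by
    rcases Nat.eq_zero_or_pos p with h0 | h1
    · exfalso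
      have := Nat.find_spec (exists_not_mem_run S m)
      rw [show Nat.find (exists_not_mem_run S m) = p from rfl, h0] at this
      exact this (by simpa using hmS)
    · exact h1
  apply Finset.card_lt_card
  rw [Finset.ssubset_iff_of_subset (Finset.sdiff_subset)]
  exact ⟨m, hmS, by first | (simp [Finset.mem_Ico]; omega) | simp [Finset.mem_Ico]⟩

theorem Psi_spec (S : Finset ℕ) (t p₀ : ℕ) (ht : ∀ x ∈ S, t < x) :
    List.Chain Rrel (t, p₀) (Psi S) ∧ Phi (Psi S) = S ∧
      ∀ q ∈ Psi S, 1 ≤ q.1 ∧ q.1 - 1 ∈ S := by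
  by_cases h : S = ∅
  · subst h; rw [Psi]; simp [Phi]; exact List.isChain_singleton _
  · rw [Psi, dif_neg h]; dsimp only
    have hne : S.Nonempty := Finset.nonempty_iff_ne_empty.mpr h
    set m := S.min' hne with hmdef
    set p := Nat.find (exists_not_mem_run S m) with hpdef
    have hmS : m ∈ S := S.min'_mem _
    have hfind : m + p ∉ S := Nat.find_spec (exists_not_mem_run S m)
    have hrun : ∀ k < p, m + k ∈ S := fun k hk =>
      not_not.mp (Nat.find_min (exists_not_mem_run S m) hk)
    have hp : 1 ≤ p := by
      rcases Nat.eq_zero_or_pos p with h0 | h1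
      · exfalso; rw [h0] at hfind; exact hfind (by simpa using hmS)
      · exact h1
    have hIco : Finset.Ico m (m + p) ⊆ S := by
      intro x hx
      simp only [Finset.mem_Ico] at hx
      have : x = m + (x - m) := by omega
      rw [this]; exact hrun _ (by omega)
    have hS' : ∀ x ∈ S \ Finset.Ico m (m + p), m + p < x := by
      intro x hx
      simp only [Finset.mem_sdiff, Finset.mem_Ico, not_and, not_lt] at hx
      have hxm : m ≤ x := S.min'_le x hx.1
      have : m + p ≤ x := hx.2 hxm
      rcases Nat.eq_or_lt_of_le this with heq | hlt
      · exact absurd (heq ▸ hx.1) hfind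
      · exact hlt
    obtain ⟨hch, hphi, hfst⟩ := Psi_spec (S \ Finset.Ico m (m + p)) (m + p) p hS'
    refine ⟨?_, ?_, ?_⟩
    · refine List.chain_cons.mpr ?_
      refine ⟨⟨hp, ?_⟩, hch⟩
      have := ht m hmS
      simp only []
      omega
    · simp only [Phi, hphi, Nat.add_sub_cancel]
      exact Finset.union_sdiff_of_subset hIco
    · intro q hq
      rcases List.mem_cons.mp hq with rfl | hq'
      · refine ⟨by omega, ?_⟩
        simp only [Nat.add_sub_assoc hp]
        exact hrun _ (by omega)
      · obtain ⟨h1, h2⟩ := hfst q hq'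
        exact ⟨h1, (Finset.sdiff_subset) h2⟩
termination_by S.card
decreasing_by
  apply Finset.card_lt_card
  rw [Finset.ssubset_iff_of_subset (Finset.sdiff_subset)]
  exact ⟨m, hmS, by first | (simp [Finset.mem_Ico]; omega) | simp [Finset.mem_Ico]⟩

/-- The number of sequences `(s₁,…,s_l,p₁,…,p_l)` of positive integers with
`s₁ < ⋯ < s_l ≤ n`, `p₁ + ⋯ + p_l = d`, and `pᵢ < sᵢ − s_{i−1}` for each `i`
(with `s₀ = 0`) equals `(n−1).choose d`. A sequence is encoded as a list of
pairs `(sᵢ, pᵢ)`; the chain condition (with initial element `(0,0)`) states that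
for consecutive pairs `(s, p)`, `(s', p')` we have `1 ≤ p'` and `p' < s' − s`. -/
theorem stmt0 (n d : ℕ) (hd : d ≤ n - 1) :
    Set.ncard {L : List (ℕ × ℕ) |
      List.Chain (fun a b : ℕ × ℕ => 1 ≤ b.2 ∧ b.2 + a.1 < b.1) (0, 0) L ∧
      (∀ x ∈ L, x.1 ≤ n) ∧ (L.map Prod.snd).sum = d}
    = Nat.choose (n - 1) d := by
  have hR : (fun a b : ℕ × ℕ => 1 ≤ b.2 ∧ b.2 + a.1 < b.1) = Rrel := rfl
  set A : Set (List (ℕ × ℕ)) := {L : List (ℕ × ℕ) |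
      List.Chain (fun a b : ℕ × ℕ => 1 ≤ b.2 ∧ b.2 + a.1 < b.1) (0, 0) L ∧
      (∀ x ∈ L, x.1 ≤ n) ∧ (L.map Prod.snd).sum = d} with hA
  have hmemA : ∀ L, L ∈ A ↔ List.Chain Rrel (0, 0) L ∧
      (∀ x ∈ L, x.1 ≤ n) ∧ (L.map Prod.snd).sum = d := by
    intro L; rw [hA]; rfl
  have himg : Phi '' A = ↑(Finset.powersetCard d (Finset.Icc 1 (n - 1))) := by
    ext S
    simp only [Set.mem_image, Finset.mem_coe, Finset.mem_powersetCard]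
    constructor
    · rintro ⟨L, hL, rfl⟩
      obtain ⟨hch, hub, hsum⟩ := (hmemA L).mp hL
      refine ⟨?_, ?_⟩
      · intro x hx
        have h1 := Phi_lb L 0 0 hch x hx
        have h2 := Phi_ub L n hub x hx
        simp only [Finset.mem_Icc]
        omega
      · rw [Phi_card L 0 0 hch, hsum]
    · rintro ⟨hsub, hcard⟩
      have ht : ∀ x ∈ S, 0 < x := by
        intro x hx
        have := hsub hx
        simp only [Finset.mem_Icc] at this
        omega
      obtain ⟨hch, hphi, hfst⟩ := Psi_spec S 0 0 ht
      refine ⟨Psi S, (hmemA _).mpr ⟨hch, ?_, ?_⟩, hphi⟩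
      · intro q hq
        obtain ⟨h1, h2⟩ := hfst q hq
        have := hsub h2
        simp only [Finset.mem_Icc] at this
        omega
      · rw [← Phi_card (Psi S) 0 0 hch, hphi, hcard]
  have hinj : Set.InjOn Phi A := by
    intro L hL L' hL' he
    exact Phi_inj L L' 0 0 0 ((hmemA L).mp hL).1 ((hmemA L').mp hL').1 he
  calc A.ncard = (Phi '' A).ncard := (Set.ncard_image_of_injOn hinj).symm
    _ = (Finset.powersetCard d (Finset.Icc 1 (n - 1))).card := by
        rw [himg, Set.ncard_coe_finset]
    _ = Nat.choose (n - 1) d := by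
        rw [Finset.card_powersetCard, Nat.card_Icc, Nat.add_sub_cancel]
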